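/- Let f ∈ ℝ, d ∈ ℝ^p, and let H be a p×p real symmetric positive semidefinite matrix. For s > 0 define z(s) = f / √(1 + (π/8)·dᵀ·(s⁻¹·I + H)⁻¹·d). Then σ(|z(s)|) → σ(|f|) as s → 0⁺. (Limit σ₀² → 0 in Proposition 2.5: as the prior variance vanishes, the Bayesian confidence recovers the MAP confidence σ(|f_μ(x)|).) -/

import Mathlib

open Matrix Filter

/-- The logistic (sigmoid) function. -/
noncomputable def sigmoid (t : ℝ) : ℝ := 1 / (1 + Real.exp (-t))

lemma quad_bounds {p : ℕ} (d : Fin p → ℝ) {H : Matrix (Fin p) (Fin p) ℝ}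
    (hH : H.PosSemidef) {s : ℝ} (hs : 0 < s) :
    0 ≤ d ⬝ᵥ ((s⁻¹ • (1 : Matrix (Fin p) (Fin p) ℝ) + H)⁻¹ *ᵥ d) ∧
      d ⬝ᵥ ((s⁻¹ • (1 : Matrix (Fin p) (Fin p) ℝ) + H)⁻¹ *ᵥ d) ≤ s * (d ⬝ᵥ d) := by
  set A : Matrix (Fin p) (Fin p) ℝ := s⁻¹ • (1 : Matrix (Fin p) (Fin p) ℝ) + H with hA
  have h1 : (s⁻¹ • (1 : Matrix (Fin p) (Fin p) ℝ)).PosDef := by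
    rw [smul_one_eq_diagonal]
    exact Matrix.PosDef.diagonal fun i => by positivity
  have hApd : A.PosDef := h1.add_posSemidef hH
  set v : Fin p → ℝ := A⁻¹ *ᵥ d with hv
  have hAv : A *ᵥ v = d := by
    rw [hv, mulVec_mulVec, Matrix.mul_nonsing_inv _ hApd.det_pos.ne'.isUnit, one_mulVec]
  set q : ℝ := d ⬝ᵥ v with hq
  have hq0 : 0 ≤ q := by
    have := hApd.inv.posSemidef.dotProduct_mulVec_nonneg d
    simpa using this
  have hqv : q = s⁻¹ * (v ⬝ᵥ v) + v ⬝ᵥ (H *ᵥ v) := by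
    have : q = (A *ᵥ v) ⬝ᵥ v := by rw [hAv]
    rw [this, hA, add_mulVec, smul_mulVec, one_mulVec, add_dotProduct,
      smul_dotProduct, smul_eq_mul]
    congr 1
    exact dotProduct_comm _ _
  have hHv : 0 ≤ v ⬝ᵥ (H *ᵥ v) := by simpa using hH.dotProduct_mulVec_nonneg v
  have hvv : v ⬝ᵥ v ≤ s * q := by
    have : s⁻¹ * (v ⬝ᵥ v) ≤ q := by linarith [hqv, hHv]
    calc v ⬝ᵥ v = s * (s⁻¹ * (v ⬝ᵥ v)) := by field_simp
      _ ≤ s * q := by nlinarith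
  have hcs : q ^ 2 ≤ (d ⬝ᵥ d) * (v ⬝ᵥ v) := by
    have h := Finset.sum_mul_sq_le_sq_mul_sq Finset.univ d v
    simpa [hq, dotProduct, pow_two] using h
  refine ⟨hq0, ?_⟩
  have hdd : 0 ≤ d ⬝ᵥ d := by simpa using dotProduct_star_self_nonneg d
  have : q ^ 2 ≤ (d ⬝ᵥ d) * (s * q) := le_trans hcs (by nlinarith)
  rcases eq_or_lt_of_le hq0 with h | h
  · rw [← h]; positivity
  · nlinarith

lemma sigmoid_continuous : Continuous sigmoid := by
  unfold sigmoid
  fun_prop (disch := intros; positivity)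

/-- Limit `σ₀² → 0` in Proposition 2.5: as the prior variance vanishes, the
Bayesian confidence recovers the MAP confidence `σ(|f|)`. -/
theorem tendsto_confidence_priorVar_zero {p : ℕ}
    (f : ℝ) (d : Fin p → ℝ)
    (H : Matrix (Fin p) (Fin p) ℝ) (hH : H.PosSemidef) :
    Tendsto
      (fun s : ℝ =>
        sigmoid |f / Real.sqrt (1 + Real.pi / 8 *
          (d ⬝ᵥ ((s⁻¹ • (1 : Matrix (Fin p) (Fin p) ℝ) + H)⁻¹ *ᵥ d)))|)
      (nhdsWithin 0 (Set.Ioi 0)) (nhds (sigmoid |f|)) := by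
  set g : ℝ → ℝ := fun s => d ⬝ᵥ ((s⁻¹ • (1 : Matrix (Fin p) (Fin p) ℝ) + H)⁻¹ *ᵥ d) with hg
  have hgt : Tendsto g (nhdsWithin 0 (Set.Ioi 0)) (nhds 0) := by
    apply squeeze_zero' (eventually_nhdsWithin_of_forall
        (fun s hs => (quad_bounds d hH hs).1))
      (eventually_nhdsWithin_of_forall (fun s hs => (quad_bounds d hH hs).2))
    have : Tendsto (fun s : ℝ => s * (d ⬝ᵥ d)) (nhds 0) (nhds (0 * (d ⬝ᵥ d))) :=
      (continuous_id.mul continuous_const).tendsto 0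
    simpa using this.mono_left nhdsWithin_le_nhds
  have hF : ContinuousAt (fun q : ℝ => sigmoid |f / Real.sqrt (1 + Real.pi / 8 * q)|) 0 := by
    apply sigmoid_continuous.continuousAt.comp
    apply continuous_abs.continuousAt.comp
    apply ContinuousAt.div continuousAt_const
    · exact Real.continuous_sqrt.continuousAt.comp (by fun_prop)
    · simp
  have := hF.tendsto.comp hgt
  simpa [hg, Function.comp_def] using this
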